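/- For ψ > 0, the integral ∫_0^∞ e^{−√u}/(u + ψ) du equals [π − 2 Si(√ψ)] sin(√ψ) − 2 Ci(√ψ) cos(√ψ), where Si(x) = ∫_0^x sin(t)/t dt and Ci(x) = −∫_x^∞ cos(t)/t dt. -/

import Mathlib

open MeasureTheory Real Filter

section Aux
open Set

lemma integral_exp_neg_mul {b : ℝ} (hb : 0 < b) :
    ∫ t in Ioi (0:ℝ), Real.exp (-(b*t)) = 1/b := by
  have := MeasureTheory.integral_comp_mul_left_Ioi (fun x => Real.exp (-x)) 0 hb
  simp only [mul_zero] at this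
  rw [this, integral_exp_neg_Ioi_zero]
  simp [one_div]

lemma aux_integrable {b : ℝ} (hb : 0 < b) {g : ℝ → ℝ} (hg : Measurable g)
    {C : ℝ} (hC : ∀ t ∈ Ioi (0:ℝ), |g t| ≤ C) :
    IntegrableOn (fun t => Real.exp (-(b*t)) * g t) (Ioi (0:ℝ)) := by
  have h1 : IntegrableOn (fun t => C * Real.exp (-(b*t))) (Ioi (0:ℝ)) := by
    simpa [neg_mul, IntegrableOn] using (exp_neg_integrableOn_Ioi 0 hb).const_mul C
  refine Integrable.mono' h1 ?_ ?_
  · exact (((Real.measurable_exp.comp ((measurable_id.const_mul b).neg)).mul hg)).aestronglyMeasurable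
  · filter_upwards [ae_restrict_mem measurableSet_Ioi] with t ht
    rw [norm_mul, Real.norm_eq_abs, Real.norm_eq_abs, abs_exp]
    calc Real.exp (-(b*t)) * |g t| ≤ Real.exp (-(b*t)) * C :=
          mul_le_mul_of_nonneg_left (hC t ht) (Real.exp_pos _).le
      _ = C * Real.exp (-(b*t)) := mul_comm _ _

lemma aux_bound {b : ℝ} (hb : 0 < b) {g : ℝ → ℝ} (hg : Measurable g)
    {C : ℝ} (hC : ∀ t ∈ Ioi (0:ℝ), |g t| ≤ C) :
    |∫ t in Ioi (0:ℝ), Real.exp (-(b*t)) * g t| ≤ C / b := by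
  have h1 : IntegrableOn (fun t => C * Real.exp (-(b*t))) (Ioi (0:ℝ)) := by
    simpa [neg_mul, IntegrableOn] using (exp_neg_integrableOn_Ioi 0 hb).const_mul C
  calc |∫ t in Ioi (0:ℝ), Real.exp (-(b*t)) * g t|
      ≤ ∫ t in Ioi (0:ℝ), |Real.exp (-(b*t)) * g t| :=
        by simpa only [Real.norm_eq_abs] using norm_integral_le_integral_norm (μ := volume.restrict (Ioi (0:ℝ))) (fun t => Real.exp (-(b*t)) * g t)
    _ ≤ ∫ t in Ioi (0:ℝ), C * Real.exp (-(b*t)) := by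
        refine integral_mono_ae (aux_integrable hb hg hC).abs h1 ?_
        filter_upwards [ae_restrict_mem measurableSet_Ioi] with t ht
        rw [abs_mul, abs_exp]
        calc Real.exp (-(b*t)) * |g t| ≤ Real.exp (-(b*t)) * C :=
              mul_le_mul_of_nonneg_left (hC t ht) (Real.exp_pos _).le
          _ = C * Real.exp (-(b*t)) := mul_comm _ _
    _ = C / b := by rw [integral_const_mul, integral_exp_neg_mul hb]; ring


lemma integral_exp_cos (t a R : ℝ) (h : t^2 + a^2 ≠ 0) :
    ∫ u in (0:ℝ)..R, Real.exp (-(t*u)) * Real.cos (a*u)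
      = (Real.exp (-(t*R)) * (a * Real.sin (a*R) - t * Real.cos (a*R)) + t) / (t^2+a^2) := by
  have key : ∀ u ∈ uIcc (0:ℝ) R, HasDerivAt
      (fun u => Real.exp (-(t*u)) * (a * Real.sin (a*u) - t * Real.cos (a*u)) / (t^2+a^2))
      (Real.exp (-(t*u)) * Real.cos (a*u)) u := by
    intro u _
    have h1 : HasDerivAt (fun u => Real.exp (-(t*u))) (-t * Real.exp (-(t*u))) u := by
      have := (Real.hasDerivAt_exp (-(t*u))).comp u (((hasDerivAt_id u).const_mul t).neg)
      simpa [mul_comm, Function.comp_def] using this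
    have h2 : HasDerivAt (fun u => a * Real.sin (a*u) - t * Real.cos (a*u))
        (a * (Real.cos (a*u) * a) - t * (-Real.sin (a*u) * a)) u := by
      have hs : HasDerivAt (fun u => Real.sin (a*u)) (Real.cos (a*u) * a) u := by
        simpa [Function.comp_def] using (Real.hasDerivAt_sin (a*u)).comp u ((hasDerivAt_id u).const_mul a)
      have hc : HasDerivAt (fun u => Real.cos (a*u)) (-Real.sin (a*u) * a) u := by
        simpa [Function.comp_def] using (Real.hasDerivAt_cos (a*u)).comp u ((hasDerivAt_id u).const_mul a)
      exact (hs.const_mul a).sub (hc.const_mul t)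
    have := (h1.mul h2).div_const (t^2+a^2)
    refine this.congr_deriv ?_
    rw [div_eq_iff h]
    ring
  rw [intervalIntegral.integral_eq_sub_of_hasDerivAt key
    (Continuous.intervalIntegrable (by continuity) _ _)]
  simp only [mul_zero, Real.sin_zero, Real.cos_zero, neg_zero, Real.exp_zero]
  field_simp
  ring

lemma fubini_identity {a : ℝ} (ha : 0 < a) {R : ℝ} (hR : 0 ≤ R) :
    ∫ u in Ioc (0:ℝ) R, Real.cos (a*u) / (1+u)
      = ∫ t in Ioi (0:ℝ), Real.exp (-t) *
          ((Real.exp (-(t*R)) * (a * Real.sin (a*R) - t * Real.cos (a*R)) + t) / (t^2+a^2)) := by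
  have hsq : ∀ t : ℝ, t^2 + a^2 ≠ 0 := fun t => by positivity
  set f : ℝ → ℝ → ℝ := fun u t => Real.cos (a*u) * Real.exp (-((1+u)*t)) with hf
  have hcont : Continuous (Function.uncurry f) := by
    apply Continuous.mul
    · exact (Real.continuous_cos.comp (continuous_const.mul continuous_fst))
    · exact Real.continuous_exp.comp ((continuous_const.add continuous_fst).mul continuous_snd).neg
  have hint : Integrable (Function.uncurry f)
      ((volume.restrict (Ioc (0:ℝ) R)).prod (volume.restrict (Ioi (0:ℝ)))) := by
    rw [integrable_prod_iff (hcont.aestronglyMeasurable)]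
    constructor
    · filter_upwards [ae_restrict_mem measurableSet_Ioc] with u hu
      simp only [Function.uncurry_apply_pair]
      have h1u : (0:ℝ) < 1 + u := by linarith [hu.1]
      have h2 : IntegrableOn (fun t => Real.exp (-((1+u)*t))) (Ioi (0:ℝ)) := by
        have h3 := exp_neg_integrableOn_Ioi 0 h1u
        apply h3.congr_fun _ measurableSet_Ioi
        intro t _; simp only []; ring_nf
      exact (h2.const_mul _)
    · have hb : ∀ᵐ u ∂(volume.restrict (Ioc (0:ℝ) R)),
          ‖∫ t in Ioi (0:ℝ), ‖f u t‖‖ ≤ 1 := by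
        filter_upwards [ae_restrict_mem measurableSet_Ioc] with u hu
        have h1u : (0:ℝ) < 1 + u := by linarith [hu.1]
        have heq : ∫ t in Ioi (0:ℝ), ‖f u t‖ = |Real.cos (a*u)| * (1/(1+u)) := by
          rw [← integral_exp_neg_mul h1u, ← integral_const_mul]
          apply setIntegral_congr_fun measurableSet_Ioi
          intro t _
          simp [hf, abs_mul, abs_exp, abs_of_nonneg (Real.exp_pos _).le]
        rw [heq, Real.norm_eq_abs, abs_mul]
        rw [abs_abs, abs_of_nonneg (by positivity : (0:ℝ) ≤ 1/(1+u))]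
        calc |Real.cos (a*u)| * (1/(1+u)) ≤ 1 * 1 := by
              apply mul_le_mul (Real.abs_cos_le_one _) _ (by positivity) zero_le_one
              rw [div_le_one h1u]; linarith [hu.1]
          _ = 1 := one_mul 1
      refine Integrable.mono' (integrable_const 1) ?_ hb
      exact (hcont.norm.aestronglyMeasurable).integral_prod_right'
  have swap := integral_integral_swap (f := f) hint
  have lhs_eq : ∫ u in Ioc (0:ℝ) R, Real.cos (a*u) / (1+u)
      = ∫ u in Ioc (0:ℝ) R, ∫ t in Ioi (0:ℝ), f u t := by
    apply setIntegral_congr_fun measurableSet_Ioc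
    intro u hu
    have h1u : (0:ℝ) < 1 + u := by linarith [hu.1]
    show Real.cos (a*u) / (1+u) = ∫ t in Ioi (0:ℝ), f u t
    rw [show (∫ t in Ioi (0:ℝ), f u t) = Real.cos (a*u) * ∫ t in Ioi (0:ℝ), Real.exp (-((1+u)*t))
        from integral_const_mul _ _, integral_exp_neg_mul h1u]
    ring
  have rhs_eq : ∀ t ∈ Ioi (0:ℝ), (∫ u in Ioc (0:ℝ) R, f u t)
      = Real.exp (-t) *
          ((Real.exp (-(t*R)) * (a * Real.sin (a*R) - t * Real.cos (a*R)) + t) / (t^2+a^2)) := by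
    intro t _
    show (∫ u in Ioc (0:ℝ) R, f u t) = _
    have : ∫ u in Ioc (0:ℝ) R, f u t = ∫ u in (0:ℝ)..R, f u t := by
      rw [intervalIntegral.integral_of_le hR]
    rw [this, ← integral_exp_cos t a R (hsq t), ← intervalIntegral.integral_const_mul]
    apply intervalIntegral.integral_congr
    intro u _
    simp only [hf]
    have hexp : Real.exp (-((1+u)*t)) = Real.exp (-t) * Real.exp (-(t*u)) := by
      rw [← Real.exp_add]; ring_nf
    rw [hexp]; ring
  rw [lhs_eq, swap]
  exact setIntegral_congr_fun measurableSet_Ioi rhs_eq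


lemma g1_meas (a : ℝ) : Measurable (fun t : ℝ => t/(t^2+a^2)) := by
  exact measurable_id.div ((measurable_id.pow_const 2).add_const _)

lemma g1_bound {a : ℝ} (ha : 0 < a) : ∀ t ∈ Ioi (0:ℝ), |t/(t^2+a^2)| ≤ 1/(2*a) := by
  intro t ht
  have ht' : 0 < t := ht
  rw [abs_of_nonneg (by positivity : (0:ℝ) ≤ t/(t^2+a^2)),
    div_le_div_iff₀ (by positivity) (by positivity)]
  nlinarith [sq_nonneg (t-a), ht'.le]

lemma F1_integrable {a : ℝ} (ha : 0 < a) :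
    IntegrableOn (fun t => Real.exp (-t) * (t/(t^2+a^2))) (Ioi (0:ℝ)) := by
  have := aux_integrable one_pos (g1_meas a) (g1_bound ha)
  simpa using this

lemma cos_tendsto {a : ℝ} (ha : 0 < a) :
    Tendsto (fun R => ∫ u in (0:ℝ)..R, Real.cos (a*u) / (1+u)) atTop
      (nhds (∫ t in Ioi (0:ℝ), Real.exp (-t) * (t/(t^2+a^2)))) := by
  set F : ℝ := ∫ t in Ioi (0:ℝ), Real.exp (-t) * (t/(t^2+a^2)) with hF
  set E : ℝ → ℝ := fun R => ∫ t in Ioi (0:ℝ),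
      Real.exp (-((1+R)*t)) * ((a * Real.sin (a*R) - t * Real.cos (a*R))/(t^2+a^2)) with hE
  have hgmeas : ∀ R : ℝ, Measurable (fun t : ℝ => (a * Real.sin (a*R) - t * Real.cos (a*R))/(t^2+a^2)) := by
    intro R
    exact (((measurable_const).sub (measurable_id.mul_const _)).div
      ((measurable_id.pow_const 2).add_const _))
  have hgbd : ∀ R : ℝ, ∀ t ∈ Ioi (0:ℝ),
      |(a * Real.sin (a*R) - t * Real.cos (a*R))/(t^2+a^2)| ≤ 3/(2*a) := by
    intro R t ht
    have ht' : 0 < t := ht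
    rw [abs_div, abs_of_nonneg (by positivity : (0:ℝ) ≤ t^2+a^2), div_le_iff₀ (by positivity)]
    have h1 : |a * Real.sin (a*R) - t * Real.cos (a*R)| ≤ a + t := by
      calc |a * Real.sin (a*R) - t * Real.cos (a*R)|
          ≤ |a * Real.sin (a*R)| + |t * Real.cos (a*R)| := by simpa [sub_eq_add_neg, abs_neg] using abs_add_le (a * Real.sin (a*R)) (-(t * Real.cos (a*R)))
        _ ≤ a * 1 + t * 1 := by
            rw [abs_mul, abs_mul, abs_of_pos ha, abs_of_pos ht']
            exact add_le_add (mul_le_mul_of_nonneg_left (Real.abs_sin_le_one _) ha.le)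
              (mul_le_mul_of_nonneg_left (Real.abs_cos_le_one _) ht'.le)
        _ = a + t := by ring
    calc |a * Real.sin (a*R) - t * Real.cos (a*R)| ≤ a + t := h1
      _ ≤ 3/(2*a) * (t^2+a^2) := by
          rw [div_mul_eq_mul_div, le_div_iff₀ (by positivity)]
          nlinarith [sq_nonneg (t-a)]
  -- identity for R ≥ 0
  have key : ∀ R : ℝ, 0 ≤ R →
      (∫ u in (0:ℝ)..R, Real.cos (a*u) / (1+u)) = E R + F := by
    intro R hR
    rw [intervalIntegral.integral_of_le hR, fubini_identity ha hR]
    have hsplit : ∀ t : ℝ,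
        Real.exp (-t) * ((Real.exp (-(t*R)) * (a * Real.sin (a*R) - t * Real.cos (a*R)) + t) / (t^2+a^2))
        = Real.exp (-((1+R)*t)) * ((a * Real.sin (a*R) - t * Real.cos (a*R))/(t^2+a^2))
          + Real.exp (-t) * (t/(t^2+a^2)) := by
      intro t
      have : Real.exp (-((1+R)*t)) = Real.exp (-t) * Real.exp (-(t*R)) := by
        rw [← Real.exp_add]; ring_nf
      rw [this]; ring
    simp only [hsplit]
    rw [integral_add (aux_integrable (by linarith : (0:ℝ) < 1+R) (hgmeas R) (hgbd R))
      (F1_integrable ha)]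
  have hE0 : Tendsto E atTop (nhds 0) := by
    apply squeeze_zero_norm' (a := fun R => (3/(2*a))/(1+R))
    · filter_upwards [eventually_ge_atTop (0:ℝ)] with R hR
      exact aux_bound (by linarith : (0:ℝ) < 1+R) (hgmeas R) (hgbd R)
    · apply Tendsto.div_atTop tendsto_const_nhds
      exact tendsto_atTop_add_const_left _ _ tendsto_id
  have : Tendsto (fun R => E R + F) atTop (nhds (0 + F)) := hE0.add_const F
  rw [zero_add] at this
  apply this.congr'
  filter_upwards [eventually_ge_atTop (0:ℝ)] with R hR
  exact (key R hR).symm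


lemma integral_exp_sin (t R : ℝ) :
    ∫ v in (0:ℝ)..R, Real.exp (-(t*v)) * Real.sin v
      = (1 - Real.exp (-(t*R)) * (Real.cos R + t * Real.sin R)) / (t^2+1) := by
  have h : (t:ℝ)^2 + 1 ≠ 0 := by positivity
  have key : ∀ v ∈ uIcc (0:ℝ) R, HasDerivAt
      (fun v => Real.exp (-(t*v)) * (-t * Real.sin v - Real.cos v) / (t^2+1))
      (Real.exp (-(t*v)) * Real.sin v) v := by
    intro v _
    have h1 : HasDerivAt (fun v => Real.exp (-(t*v))) (-t * Real.exp (-(t*v))) v := by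
      have := (Real.hasDerivAt_exp (-(t*v))).comp v (((hasDerivAt_id v).const_mul t).neg)
      simpa [mul_comm, Function.comp_def] using this
    have h2 : HasDerivAt (fun v => -t * Real.sin v - Real.cos v)
        (-t * Real.cos v - (-Real.sin v)) v :=
      ((Real.hasDerivAt_sin v).const_mul (-t)).sub (Real.hasDerivAt_cos v)
    have := (h1.mul h2).div_const (t^2+1)
    refine this.congr_deriv ?_
    rw [div_eq_iff h]
    ring
  rw [intervalIntegral.integral_eq_sub_of_hasDerivAt key
    (Continuous.intervalIntegrable (by continuity) _ _)]
  simp only [mul_zero, Real.sin_zero, Real.cos_zero, neg_zero, Real.exp_zero]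
  field_simp
  ring

lemma fubini_identity_sin {R : ℝ} (hR : 0 ≤ R) :
    ∫ v in Ioc (0:ℝ) R, Real.sin v / v
      = ∫ t in Ioi (0:ℝ), (1 - Real.exp (-(t*R)) * (Real.cos R + t * Real.sin R)) / (t^2+1) := by
  set f : ℝ → ℝ → ℝ := fun v t => Real.sin v * Real.exp (-(v*t)) with hf
  have hcont : Continuous (Function.uncurry f) := by
    apply Continuous.mul
    · exact Real.continuous_sin.comp continuous_fst
    · exact Real.continuous_exp.comp (continuous_fst.mul continuous_snd).neg
  have hint : Integrable (Function.uncurry f)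
      ((volume.restrict (Ioc (0:ℝ) R)).prod (volume.restrict (Ioi (0:ℝ)))) := by
    rw [integrable_prod_iff (hcont.aestronglyMeasurable)]
    constructor
    · filter_upwards [ae_restrict_mem measurableSet_Ioc] with v hv
      simp only [Function.uncurry_apply_pair]
      have h2 : IntegrableOn (fun t => Real.exp (-(v*t))) (Ioi (0:ℝ)) := by
        have h3 := exp_neg_integrableOn_Ioi 0 hv.1
        apply h3.congr_fun _ measurableSet_Ioi
        intro t _; simp only []; ring_nf
      exact (h2.const_mul _)
    · have hb : ∀ᵐ v ∂(volume.restrict (Ioc (0:ℝ) R)),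
          ‖∫ t in Ioi (0:ℝ), ‖f v t‖‖ ≤ 1 := by
        filter_upwards [ae_restrict_mem measurableSet_Ioc] with v hv
        have hv' : 0 < v := hv.1
        have heq : ∫ t in Ioi (0:ℝ), ‖f v t‖ = |Real.sin v| * (1/v) := by
          rw [← integral_exp_neg_mul hv', ← integral_const_mul]
          apply setIntegral_congr_fun measurableSet_Ioi
          intro t _
          simp [hf, abs_mul, abs_exp, mul_comm v t]
        rw [heq, Real.norm_eq_abs, abs_mul, abs_abs,
          abs_of_nonneg (by positivity : (0:ℝ) ≤ 1/v)]
        rw [mul_one_div, div_le_one hv']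
        calc |Real.sin v| ≤ |v| := Real.abs_sin_le_abs
          _ = v := abs_of_pos hv'
      refine Integrable.mono' (integrable_const 1) ?_ hb
      exact (hcont.norm.aestronglyMeasurable).integral_prod_right'
  have swap := integral_integral_swap (f := f) hint
  have lhs_eq : ∫ v in Ioc (0:ℝ) R, Real.sin v / v
      = ∫ v in Ioc (0:ℝ) R, ∫ t in Ioi (0:ℝ), f v t := by
    apply setIntegral_congr_fun measurableSet_Ioc
    intro v hv
    have hv' : 0 < v := hv.1
    show Real.sin v / v = ∫ t in Ioi (0:ℝ), f v t
    rw [show (∫ t in Ioi (0:ℝ), f v t) = Real.sin v * ∫ t in Ioi (0:ℝ), Real.exp (-(v*t))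
        from integral_const_mul _ _, integral_exp_neg_mul hv']
    ring
  have rhs_eq : ∀ t ∈ Ioi (0:ℝ), (∫ v in Ioc (0:ℝ) R, f v t)
      = (1 - Real.exp (-(t*R)) * (Real.cos R + t * Real.sin R)) / (t^2+1) := by
    intro t _
    show (∫ v in Ioc (0:ℝ) R, f v t) = _
    have : ∫ v in Ioc (0:ℝ) R, f v t = ∫ v in (0:ℝ)..R, f v t := by
      rw [intervalIntegral.integral_of_le hR]
    rw [this, ← integral_exp_sin t R]
    apply intervalIntegral.integral_congr
    intro v _
    simp only [hf]
    rw [mul_comm v t]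
    ring
  rw [lhs_eq, swap]
  exact setIntegral_congr_fun measurableSet_Ioi rhs_eq

lemma dirichlet : Tendsto (fun R => ∫ v in (0:ℝ)..R, Real.sin v / v) atTop
    (nhds (Real.pi/2)) := by
  have hmeas1 : Measurable (fun t : ℝ => 1/(t^2+1)) :=
    measurable_const.div ((measurable_id.pow_const 2).add_const _)
  have hmeas2 : ∀ R : ℝ, Measurable (fun t : ℝ => (Real.cos R + t * Real.sin R)/(t^2+1)) :=
    fun R => (measurable_const.add (measurable_id.mul_const _)).div
      ((measurable_id.pow_const 2).add_const _)
  have hbd2 : ∀ R : ℝ, ∀ t ∈ Ioi (0:ℝ), |(Real.cos R + t * Real.sin R)/(t^2+1)| ≤ 2 := by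
    intro R t ht
    have ht' : 0 < t := ht
    rw [abs_div, abs_of_nonneg (by positivity : (0:ℝ) ≤ t^2+1), div_le_iff₀ (by positivity)]
    calc |Real.cos R + t * Real.sin R| ≤ |Real.cos R| + |t * Real.sin R| := abs_add_le _ _
      _ ≤ 1 + t * 1 := by
          refine add_le_add (Real.abs_cos_le_one _) ?_
          rw [abs_mul, abs_of_pos ht']
          exact mul_le_mul_of_nonneg_left (Real.abs_sin_le_one _) ht'.le
      _ ≤ 2 * (t^2+1) := by nlinarith [sq_nonneg (t-1)]
  have hpi : ∫ t in Ioi (0:ℝ), 1/(t^2+1) = Real.pi/2 := by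
    have := integral_Ioi_inv_one_add_sq (i := (0:ℝ))
    rw [Real.arctan_zero, sub_zero] at this
    rw [← this]
    apply setIntegral_congr_fun measurableSet_Ioi
    intro t _
    simp [add_comm (t^2) 1, one_div]
  set E : ℝ → ℝ := fun R => ∫ t in Ioi (0:ℝ),
      Real.exp (-(R*t)) * ((Real.cos R + t * Real.sin R)/(t^2+1)) with hEdef
  have hint1 : IntegrableOn (fun t : ℝ => 1/(t^2+1)) (Ioi (0:ℝ)) := by
    apply (integrable_inv_one_add_sq.integrableOn).congr_fun _ measurableSet_Ioi
    intro t _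
    show (1 + t^2)⁻¹ = 1/(t^2+1)
    rw [one_div, add_comm]
  have key : ∀ R : ℝ, 1 ≤ R →
      (∫ v in (0:ℝ)..R, Real.sin v / v) = Real.pi/2 - E R := by
    intro R hR1
    have hR : (0:ℝ) ≤ R := by linarith
    have hRpos : (0:ℝ) < R := by linarith
    have h1 : ∫ v in (0:ℝ)..R, Real.sin v / v = ∫ v in Ioc (0:ℝ) R, Real.sin v / v := by
      rw [intervalIntegral.integral_of_le hR]
    rw [h1, fubini_identity_sin hR]
    have hsplit : ∀ t : ℝ,
        (1 - Real.exp (-(t*R)) * (Real.cos R + t * Real.sin R)) / (t^2+1)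
        = 1/(t^2+1) - Real.exp (-(R*t)) * ((Real.cos R + t * Real.sin R)/(t^2+1)) := by
      intro t
      rw [mul_comm t R]
      ring
    simp only [hsplit]
    rw [integral_sub hint1 (aux_integrable hRpos (hmeas2 R) (hbd2 R)), hpi]
  have hE0 : Tendsto E atTop (nhds 0) := by
    apply squeeze_zero_norm' (a := fun R => 2/R)
    · filter_upwards [eventually_ge_atTop (1:ℝ)] with R hR1
      exact aux_bound (by linarith) (hmeas2 R) (hbd2 R)
    · exact Tendsto.div_atTop tendsto_const_nhds tendsto_id
  have h5 : Tendsto (fun R => Real.pi/2 - E R) atTop (nhds (Real.pi/2 - 0)) :=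
    tendsto_const_nhds.sub hE0
  rw [sub_zero] at h5
  apply h5.congr'
  filter_upwards [eventually_ge_atTop (1:ℝ)] with R hR1
  exact (key R hR1).symm


lemma sinc_ii (x y : ℝ) : IntervalIntegrable (fun v => Real.sin v / v) volume x y := by
  rw [intervalIntegrable_iff]
  apply Integrable.mono' (g := fun _ => (1:ℝ))
  · exact integrableOn_const measure_Ioc_lt_top.ne
  · exact (Real.measurable_sin.div measurable_id).aestronglyMeasurable
  · apply Filter.Eventually.of_forall
    intro v
    rw [Real.norm_eq_abs, abs_div]
    rcases eq_or_ne v 0 with rfl | hv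
    · simp
    · rw [div_le_one (abs_pos.2 hv)]
      exact Real.abs_sin_le_abs

lemma cov {a : ℝ} (ha : 0 < a) (R : ℝ) :
    ∫ u in (0:ℝ)..R, Real.cos (a*u)/(1+u) = ∫ v in a..(a*R+a), Real.cos (v-a)/v := by
  have h := intervalIntegral.integral_comp_mul_add (a := (0:ℝ)) (b := R)
    (f := fun v => Real.cos (v-a)/v) ha.ne' a
  have h2 : ∫ u in (0:ℝ)..R, Real.cos (a*u)/(1+u)
      = a * ∫ u in (0:ℝ)..R, Real.cos (a*u+a-a)/(a*u+a) := by
    rw [← intervalIntegral.integral_const_mul]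
    apply intervalIntegral.integral_congr
    intro u _
    simp only []
    rw [add_sub_cancel_right]
    rw [show a*u+a = a*(1+u) by ring]
    rw [mul_comm a (1+u), ← div_div]
    rw [mul_div_cancel₀ _ ha.ne']
  rw [h2, h]
  rw [mul_zero, zero_add, smul_eq_mul, ← mul_assoc, mul_inv_cancel₀ ha.ne', one_mul]

lemma split_int {a T : ℝ} (ha : 0 < a) (haT : a ≤ T) :
    ∫ v in a..T, Real.cos (v-a)/v
      = Real.cos a * (∫ v in a..T, Real.cos v/v) + Real.sin a * ∫ v in a..T, Real.sin v/v := by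
  have hpos : ∀ v ∈ uIcc a T, (0:ℝ) < v := by
    intro v hv
    rw [uIcc_of_le haT] at hv
    linarith [hv.1]
  have hii_cos : IntervalIntegrable (fun v => Real.cos v/v) volume a T :=
    (ContinuousOn.div Real.continuous_cos.continuousOn continuousOn_id
      (fun v hv => (hpos v hv).ne')).intervalIntegrable
  have hii_sin : IntervalIntegrable (fun v => Real.sin v/v) volume a T :=
    (ContinuousOn.div Real.continuous_sin.continuousOn continuousOn_id
      (fun v hv => (hpos v hv).ne')).intervalIntegrable
  have congr1 : ∫ v in a..T, Real.cos (v-a)/v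
      = ∫ v in a..T, (Real.cos a * (Real.cos v/v) + Real.sin a * (Real.sin v/v)) := by
    apply intervalIntegral.integral_congr
    intro v _
    simp only []
    rw [Real.cos_sub]
    ring
  rw [congr1, intervalIntegral.integral_add (hii_cos.const_mul _) (hii_sin.const_mul _),
    intervalIntegral.integral_const_mul, intervalIntegral.integral_const_mul]


end Aux

open Set in
/-- ∫_0^∞ e^{-√u}/(u+ψ) du = [π - 2 Si(√ψ)] sin(√ψ) - 2 Ci(√ψ) cos(√ψ), where
Si(x) = ∫_0^x sin t / t dt and Ci(x) = -∫_x^∞ cos t / t dt (as an improper limit L). -/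
theorem integral_exp_sqrt_div (ψ : ℝ) (hψ : 0 < ψ) (L : ℝ)
    (hL : Tendsto (fun T => ∫ t in Real.sqrt ψ..T, Real.cos t / t) atTop (nhds L)) :
    ∫ u in Set.Ioi (0 : ℝ), Real.exp (-Real.sqrt u) / (u + ψ)
      = (Real.pi - 2 * ∫ t in (0 : ℝ)..Real.sqrt ψ, Real.sin t / t) * Real.sin (Real.sqrt ψ)
        - 2 * (-L) * Real.cos (Real.sqrt ψ) := by
  set a := Real.sqrt ψ with hadef
  have ha : 0 < a := Real.sqrt_pos.2 hψ
  have ha2 : a^2 = ψ := Real.sq_sqrt hψ.le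
  set Si : ℝ := ∫ t in (0:ℝ)..a, Real.sin t / t with hSi
  set F : ℝ := ∫ t in Ioi (0:ℝ), Real.exp (-t) * (t/(t^2+a^2)) with hF
  -- step 1: substitution u = t^2
  have himg : (fun t : ℝ => t^2) '' Ioi 0 = Ioi 0 := by
    ext x
    constructor
    · rintro ⟨t, ht, rfl⟩
      have : (0:ℝ) < t := ht
      exact mem_Ioi.2 (by positivity)
    · intro hx
      exact ⟨Real.sqrt x, mem_Ioi.2 (Real.sqrt_pos.2 hx), Real.sq_sqrt (le_of_lt hx)⟩
  have hderiv : ∀ x ∈ Ioi (0:ℝ), HasDerivWithinAt (fun t : ℝ => t^2) (2*x) (Ioi 0) x := by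
    intro x _
    simpa using (hasDerivAt_pow 2 x).hasDerivWithinAt
  have hinj : InjOn (fun t : ℝ => t^2) (Ioi 0) := by
    intro x hx y hy h
    have hx' : (0:ℝ) < x := hx
    have hy' : (0:ℝ) < y := hy
    rcases sq_eq_sq_iff_eq_or_eq_neg.mp h with h1 | h1
    · exact h1
    · linarith
  have step1 : ∫ u in Ioi (0:ℝ), Real.exp (-Real.sqrt u) / (u + ψ) = 2 * F := by
    rw [← himg, integral_image_eq_integral_abs_deriv_smul measurableSet_Ioi hderiv hinj]
    rw [hF, ← integral_const_mul]
    apply setIntegral_congr_fun measurableSet_Ioi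
    intro t ht
    have ht' : (0:ℝ) < t := ht
    simp only [smul_eq_mul]
    rw [Real.sqrt_sq ht'.le, abs_of_pos (by positivity : (0:ℝ) < 2*t), ha2]
    field_simp
  -- step 2: second limit for the same function
  have hT : Tendsto (fun R : ℝ => a*R+a) atTop atTop :=
    tendsto_atTop_add_const_right _ a (Tendsto.const_mul_atTop ha tendsto_id)
  have hcosL : Tendsto (fun R : ℝ => ∫ v in a..(a*R+a), Real.cos v/v) atTop (nhds L) :=
    hL.comp hT
  have hsinL : Tendsto (fun R : ℝ => ∫ v in a..(a*R+a), Real.sin v/v) atTop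
      (nhds (Real.pi/2 - Si)) := by
    have h1 : Tendsto (fun T : ℝ => ∫ v in a..T, Real.sin v/v) atTop (nhds (Real.pi/2 - Si)) := by
      have h2 := dirichlet.sub_const Si
      apply h2.congr
      intro T
      rw [hSi]
      exact intervalIntegral.integral_interval_sub_left (sinc_ii 0 T) (sinc_ii 0 a)
    exact h1.comp hT
  have key2 : Tendsto (fun R => ∫ u in (0:ℝ)..R, Real.cos (a*u) / (1+u)) atTop
      (nhds (Real.cos a * L + Real.sin a * (Real.pi/2 - Si))) := by
    have hcomb := (hcosL.const_mul (Real.cos a)).add (hsinL.const_mul (Real.sin a))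
    apply hcomb.congr'
    filter_upwards [eventually_ge_atTop (0:ℝ)] with R hR
    have haT : a ≤ a*R+a := by nlinarith
    rw [cov ha R, split_int ha haT]
  have hFeq : F = Real.cos a * L + Real.sin a * (Real.pi/2 - Si) :=
    tendsto_nhds_unique (cos_tendsto ha) key2
  rw [step1, hFeq]
  ring
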